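/- The element r = A ⊗ B - B ⊗ A + (γ/δ)(H ⊗ E - E ⊗ H) + J ⊗ B - B ⊗ J in L ⊗ L satisfies the classical Yang-Baxter equation [[r,r]] = [r_{12}, r_{13}] + [r_{12}, r_{23}] + [r_{13}, r_{23}] = 0, where L is the 5-dimensional Lie algebra with basis {J,H,E,A,B} and brackets [H,E]=δE, [H,B]=δB, [A,B]=γE, [J,A]=-μA, [J,B]=μB (other brackets of basis elements zero), with μ = δ. -/

import Mathlib

open TensorProduct

attribute [local instance 100] LieRing.ofAssociativeRing

set_option maxHeartbeats 2000000 in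
/-- The classical r-matrix r = A∧B + (γ/δ) H∧E + J∧B of the Lie algebra L
(with μ = δ) satisfies the classical Yang-Baxter equation in U(L)^{⊗3}. -/
theorem stmt9 (δ γ μ : ℂ) (hδ : δ ≠ 0) (hγ : γ ≠ 0) (hμδ : μ = δ)
    (L : Type*) [LieRing L] [LieAlgebra ℂ L] (J H E A B : L)
    (hHE : ⁅H, E⁆ = δ • E) (hHA : ⁅H, A⁆ = 0) (hHB : ⁅H, B⁆ = δ • B)
    (hAB : ⁅A, B⁆ = γ • E) (hEA : ⁅E, A⁆ = 0) (hEB : ⁅E, B⁆ = 0)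
    (hJH : ⁅J, H⁆ = 0) (hJE : ⁅J, E⁆ = 0)
    (hJA : ⁅J, A⁆ = -(μ • A)) (hJB : ⁅J, B⁆ = μ • B) :
    let U := UniversalEnvelopingAlgebra ℂ L
    let ι : L →ₗ⁅ℂ⁆ UniversalEnvelopingAlgebra ℂ L := UniversalEnvelopingAlgebra.ι ℂ
    let r12 : U ⊗[ℂ] U ⊗[ℂ] U :=
      ι A ⊗ₜ[ℂ] ι B ⊗ₜ[ℂ] 1 - ι B ⊗ₜ[ℂ] ι A ⊗ₜ[ℂ] 1
        + (γ / δ) • (ι H ⊗ₜ[ℂ] ι E ⊗ₜ[ℂ] 1 - ι E ⊗ₜ[ℂ] ι H ⊗ₜ[ℂ] 1)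
        + ι J ⊗ₜ[ℂ] ι B ⊗ₜ[ℂ] 1 - ι B ⊗ₜ[ℂ] ι J ⊗ₜ[ℂ] 1
    let r13 : U ⊗[ℂ] U ⊗[ℂ] U :=
      ι A ⊗ₜ[ℂ] (1 : U) ⊗ₜ[ℂ] ι B - ι B ⊗ₜ[ℂ] (1 : U) ⊗ₜ[ℂ] ι A
        + (γ / δ) • (ι H ⊗ₜ[ℂ] (1 : U) ⊗ₜ[ℂ] ι E - ι E ⊗ₜ[ℂ] (1 : U) ⊗ₜ[ℂ] ι H)
        + ι J ⊗ₜ[ℂ] (1 : U) ⊗ₜ[ℂ] ι B - ι B ⊗ₜ[ℂ] (1 : U) ⊗ₜ[ℂ] ι J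
    let r23 : U ⊗[ℂ] U ⊗[ℂ] U :=
      (1 : U) ⊗ₜ[ℂ] ι A ⊗ₜ[ℂ] ι B - (1 : U) ⊗ₜ[ℂ] ι B ⊗ₜ[ℂ] ι A
        + (γ / δ) • ((1 : U) ⊗ₜ[ℂ] ι H ⊗ₜ[ℂ] ι E - (1 : U) ⊗ₜ[ℂ] ι E ⊗ₜ[ℂ] ι H)
        + (1 : U) ⊗ₜ[ℂ] ι J ⊗ₜ[ℂ] ι B - (1 : U) ⊗ₜ[ℂ] ι B ⊗ₜ[ℂ] ι J
    ⁅r12, r13⁆ + ⁅r12, r23⁆ + ⁅r13, r23⁆ = 0 := by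
  rw [hμδ] at hJA hJB
  obtain ⟨c, rfl⟩ : ∃ c, γ = c * δ := ⟨γ / δ, (div_mul_cancel₀ γ hδ).symm⟩
  have hcd : c * δ / δ = c := mul_div_cancel_right₀ c hδ
  intro U ι r12 r13 r23
  simp only [U, ι, r12, r13, r23, hcd]
  have key : ∀ x y : L, (UniversalEnvelopingAlgebra.ι ℂ y) * (UniversalEnvelopingAlgebra.ι ℂ x)
      = (UniversalEnvelopingAlgebra.ι ℂ x) * (UniversalEnvelopingAlgebra.ι ℂ y)
        - (UniversalEnvelopingAlgebra.ι ℂ ⁅x, y⁆) := by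
    intro x y
    rw [LieHom.map_lie, Ring.lie_def, sub_sub_cancel]
  set f := UniversalEnvelopingAlgebra.ι (L := L) ℂ with hf
  have hBA : f B * f A = f A * f B - (c * δ) • f E := by
    rw [key A B, hAB, map_smul]
  have hEH : f E * f H = f H * f E - δ • f E := by rw [key H E, hHE, map_smul]
  have hAH : f A * f H = f H * f A := by rw [key H A, hHA]; simp
  have hBH : f B * f H = f H * f B - δ • f B := by rw [key H B, hHB, map_smul]
  have hAE : f A * f E = f E * f A := by rw [key E A, hEA]; simp
  have hBE : f B * f E = f E * f B := by rw [key E B, hEB]; simp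
  have hHJ : f H * f J = f J * f H := by rw [key J H, hJH]; simp
  have hEJ : f E * f J = f J * f E := by rw [key J E, hJE]; simp
  have hAJ : f A * f J = f J * f A + δ • f A := by
    rw [key J A, hJA]; simp [sub_neg_eq_add]
  have hBJ : f B * f J = f J * f B - δ • f B := by rw [key J B, hJB, map_smul]
  simp only [Ring.lie_def, sub_mul, mul_sub, add_mul, mul_add, smul_mul_assoc,
    mul_smul_comm, Algebra.TensorProduct.tmul_mul_tmul, one_mul, mul_one,
    smul_sub, smul_add]
  simp only [hBA, hEH, hAH, hBH, hAE, hBE, hHJ, hEJ, hAJ, hBJ]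
  simp only [tmul_sub, sub_tmul, tmul_add, add_tmul, ← smul_tmul', tmul_smul,
    smul_sub, smul_add, smul_smul]
  module
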